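/- (Game characterization of the convex weight of states, finite-dimensional case) Let F be a nonempty compact convex set of d×d density matrices and let ρ be a d×d density matrix. Then inf { Re(tr(Y·ρ)) / (inf_{σ∈F} Re(tr(Y·σ))) : Y a d×d positive semidefinite matrix with inf_{σ∈F} Re(tr(Y·σ)) > 0 } = 1 − W_F(ρ). -/

import Mathlib

open scoped ENNReal NNReal ComplexOrder

/-- A density matrix: a positive semidefinite complex matrix of trace one. -/
def IsDensity {d : ℕ} (ρ : Matrix (Fin d) (Fin d) ℂ) : Prop :=
  ρ.PosSemidef ∧ ρ.trace = 1

/-- The convex weight of a state `ρ` w.r.t. a free set `F`: the infimum of those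
`μ ∈ [0,1]` for which there are a density matrix `τ` and `σ ∈ F` with
`ρ = μ • τ + (1 - μ) • σ`, with `inf ∅ = ∞`. -/
noncomputable def WgtS {d : ℕ} (F : Set (Matrix (Fin d) (Fin d) ℂ))
    (ρ : Matrix (Fin d) (Fin d) ℂ) : ℝ≥0∞ :=
  ⨅ μ ∈ {μ : ℝ | 0 ≤ μ ∧ μ ≤ 1 ∧ ∃ τ, IsDensity τ ∧
      ∃ σ ∈ F, ρ = μ • τ + (1 - μ) • σ}, ENNReal.ofReal μ

namespace WgtGameAux

open Matrix

variable {d : ℕ}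

instance : LocallyConvexSpace ℝ (Matrix (Fin d) (Fin d) ℂ) :=
  (inferInstance : LocallyConvexSpace ℝ (Fin d → Fin d → ℂ))

lemma psd_trace_nonneg {A : Matrix (Fin d) (Fin d) ℂ} (hA : A.PosSemidef) :
    0 ≤ A.trace.re := by
  rw [Matrix.trace, Complex.re_sum]
  refine Finset.sum_nonneg fun i _ => ?_
  have := hA.dotProduct_mulVec_nonneg (Pi.single i 1)
  have h1 : star (Pi.single i 1 : Fin d → ℂ) ⬝ᵥ A *ᵥ Pi.single i 1 = A i i := by
    simp [Matrix.mulVec_single, dotProduct, Pi.single_apply, apply_ite]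
  rw [h1] at this
  exact (Complex.nonneg_iff.mp this).1

lemma re_trace_mul_nonneg {A B : Matrix (Fin d) (Fin d) ℂ} (hA : A.PosSemidef)
    (hB : B.PosSemidef) : 0 ≤ ((A * B).trace).re := by
  obtain ⟨C, rfl⟩ : ∃ C : Matrix (Fin d) (Fin d) ℂ, B = Cᴴ * C := by
    open scoped MatrixOrder Matrix.Norms.L2Operator in
    exact CStarAlgebra.nonneg_iff_eq_star_mul_self.mp hB.nonneg
  have : (A * (Cᴴ * C)).trace = (C * A * Cᴴ).trace := by
    rw [← Matrix.mul_assoc, Matrix.trace_mul_cycle]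
  rw [this]
  exact psd_trace_nonneg (hA.mul_mul_conjTranspose_same C)

lemma trace_mul_vecMulVec (H : Matrix (Fin d) (Fin d) ℂ) (x : Fin d → ℂ) :
    (H * vecMulVec x (star x)).trace = star x ⬝ᵥ H *ᵥ x := by
  simp only [Matrix.trace, Matrix.diag, Matrix.mul_apply, Matrix.vecMulVec_apply,
    dotProduct, Matrix.mulVec, Pi.star_apply, Finset.mul_sum]
  refine Finset.sum_congr rfl fun i _ => Finset.sum_congr rfl fun j _ => ?_
  ring

lemma vecMulVec_posSemidef (x : Fin d → ℂ) : (vecMulVec x (star x)).PosSemidef := by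
  apply Matrix.PosSemidef.of_dotProduct_mulVec_nonneg
  · ext i j
    simp [Matrix.vecMulVec_apply, mul_comm]
  · intro y
    have : star y ⬝ᵥ (vecMulVec x (star x)) *ᵥ y = star (star x ⬝ᵥ y) * (star x ⬝ᵥ y) := by
      simp only [dotProduct, Matrix.mulVec, Matrix.vecMulVec_apply, Pi.star_apply,
        Finset.mul_sum, Finset.sum_mul, star_sum, star_mul', star_star]
      rw [Finset.sum_comm]
      refine Finset.sum_congr rfl fun i _ => Finset.sum_congr rfl fun j _ => ?_
      ring
    rw [this]
    exact star_mul_self_nonneg _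

lemma herm_dot_self_star {H : Matrix (Fin d) (Fin d) ℂ} (hH : H.IsHermitian) (x : Fin d → ℂ) :
    star (star x ⬝ᵥ H *ᵥ x) = star x ⬝ᵥ H *ᵥ x := by
  simp only [dotProduct, Matrix.mulVec, star_sum, star_mul', Pi.star_apply, star_star,
    Finset.mul_sum]
  rw [Finset.sum_comm]
  refine Finset.sum_congr rfl fun a _ => Finset.sum_congr rfl fun b _ => ?_
  have h1 : star (H b a) = H a b := by
    have := congrFun (congrFun hH.eq a) b
    simpa [Matrix.conjTranspose_apply] using this
  rw [h1]
  ring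

lemma psd_of_re_trace_nonneg {H : Matrix (Fin d) (Fin d) ℂ} (hH : H.IsHermitian)
    (h : ∀ B : Matrix (Fin d) (Fin d) ℂ, B.PosSemidef → 0 ≤ ((H * B).trace).re) :
    H.PosSemidef := by
  refine Matrix.PosSemidef.of_dotProduct_mulVec_nonneg hH fun x => ?_
  have h1 := h _ (vecMulVec_posSemidef x)
  rw [trace_mul_vecMulVec] at h1
  rw [Complex.nonneg_iff]
  refine ⟨h1, ?_⟩
  have him := congrArg Complex.im (herm_dot_self_star hH x)
  simp only [Complex.star_def, Complex.conj_im] at him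
  linarith

lemma psd_smul {A : Matrix (Fin d) (Fin d) ℂ} (hA : A.PosSemidef) {r : ℝ} (hr : 0 ≤ r) :
    (r • A).PosSemidef := by
  apply Matrix.PosSemidef.of_dotProduct_mulVec_nonneg
  · show (r • A)ᴴ = r • A
    rw [Matrix.conjTranspose_smul, star_trivial, hA.1.eq]
  · intro x
    have h := hA.dotProduct_mulVec_nonneg x
    have heq : star x ⬝ᵥ (r • A) *ᵥ x = r • (star x ⬝ᵥ A *ᵥ x) := by
      rw [Matrix.smul_mulVec, dotProduct_smul]
    rw [heq]
    rw [Complex.nonneg_iff] at h ⊢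
    constructor
    · rw [Complex.smul_re]
      exact mul_nonneg hr h.1
    · rw [Complex.smul_im, ← h.2]
      simp

lemma convex_psd : Convex ℝ {A : Matrix (Fin d) (Fin d) ℂ | A.PosSemidef} := by
  intro x hx y hy a b ha hb _
  exact (psd_smul hx ha).add (psd_smul hy hb)

lemma isClosed_psd : IsClosed {A : Matrix (Fin d) (Fin d) ℂ | A.PosSemidef} := by
  have hset : {A : Matrix (Fin d) (Fin d) ℂ | A.PosSemidef} =
      {A | Aᴴ = A} ∩ ⋂ x : Fin d → ℂ, {A | 0 ≤ star x ⬝ᵥ A *ᵥ x} := by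
    ext A
    simp only [Set.mem_setOf_eq, Set.mem_inter_iff, Set.mem_iInter, Matrix.posSemidef_iff_dotProduct_mulVec,
      Matrix.IsHermitian]
  rw [hset]
  refine IsClosed.inter ?_ (isClosed_iInter fun x => ?_)
  · exact isClosed_eq (continuous_id.matrix_conjTranspose) continuous_id
  · have hc : Continuous fun A : Matrix (Fin d) (Fin d) ℂ => star x ⬝ᵥ A *ᵥ x := by
      have heq : (fun A : Matrix (Fin d) (Fin d) ℂ => star x ⬝ᵥ A *ᵥ x) =
          fun A => ∑ i, ∑ j, star (x i) * A i j * x j := by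
        funext A
        simp only [dotProduct, Matrix.mulVec, Pi.star_apply, Finset.mul_sum]
        exact Finset.sum_congr rfl fun i _ => Finset.sum_congr rfl fun j _ => by ring
      rw [heq]
      exact continuous_finset_sum _ fun i _ => continuous_finset_sum _ fun j _ =>
        ((continuous_const.mul ((continuous_apply_apply i j))).mul continuous_const)
    exact IsClosed.preimage hc (isClosed_le continuous_const continuous_id)

lemma clm_eq_re_trace (f : Matrix (Fin d) (Fin d) ℂ →L[ℝ] ℝ) :
    ∃ Y : Matrix (Fin d) (Fin d) ℂ, ∀ X, f X = ((Y * X).trace).re := by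
  refine ⟨Matrix.of fun k j => (f (single j k 1) : ℂ) -
      (f (single j k Complex.I) : ℂ) * Complex.I, fun X => ?_⟩
  have hX : f X = ∑ i, ∑ j, f (single i j (X i j)) := by
    conv_lhs => rw [matrix_eq_sum_single X]
    rw [map_sum]
    exact Finset.sum_congr rfl fun i _ => map_sum f _ _
  rw [hX]
  have hR : ((Matrix.of fun k j => (f (single j k 1) : ℂ) -
      (f (single j k Complex.I) : ℂ) * Complex.I : Matrix (Fin d) (Fin d) ℂ) * X).trace.re
      = ∑ i, ∑ j, ((X i j).re * f (single i j 1) +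
          (X i j).im * f (single i j Complex.I)) := by
    rw [Matrix.trace]
    simp only [Matrix.diag, Matrix.mul_apply, Matrix.of_apply]
    rw [Complex.re_sum]
    simp only [Complex.re_sum]
    rw [Finset.sum_comm]
    refine Finset.sum_congr rfl fun i _ => Finset.sum_congr rfl fun j _ => ?_
    simp [Complex.mul_re, Complex.sub_re, Complex.sub_im, Complex.mul_im]
    ring
  rw [hR]
  refine Finset.sum_congr rfl fun i _ => Finset.sum_congr rfl fun j _ => ?_
  have h1 : single i j (X i j) = (X i j).re • single i j (1:ℂ) +
      (X i j).im • single i j Complex.I := by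
    rw [smul_single, smul_single, ← single_add]
    simp [Complex.real_smul]
  rw [h1, map_add, _root_.map_smul, _root_.map_smul, smul_eq_mul, smul_eq_mul]

lemma sep_witness {F : Set (Matrix (Fin d) (Fin d) ℂ)} (hne : F.Nonempty)
    (hcomp : IsCompact F) (hconv : Convex ℝ F)
    (hFherm : ∀ σ ∈ F, σ.IsHermitian)
    {ρ : Matrix (Fin d) (Fin d) ℂ} (hρ : ρ.PosSemidef) {t : ℝ} (ht : 0 < t)
    (hinf : ∀ σ ∈ F, ¬ (ρ - t • σ).PosSemidef) :
    ∃ Y : Matrix (Fin d) (Fin d) ℂ, Y.PosSemidef ∧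
      0 < sInf ((fun σ => ((Y * σ).trace).re) '' F) ∧
      ((Y * ρ).trace).re / sInf ((fun σ => ((Y * σ).trace).re) '' F) ≤ t := by
  have hs_comp : IsCompact ((fun σ => ρ - t • σ) '' F) :=
    hcomp.image (continuous_const.sub (continuous_id.const_smul t))
  have hs_conv : Convex ℝ ((fun σ => ρ - t • σ) '' F) := by
    rintro _ ⟨σ₁, h₁, rfl⟩ _ ⟨σ₂, h₂, rfl⟩ a b ha hb hab
    refine ⟨a • σ₁ + b • σ₂, hconv h₁ h₂ ha hb hab, ?_⟩
    have hρab : a • ρ + b • ρ = ρ := by rw [← add_smul, hab, one_smul]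
    have e1 : t • (a • σ₁ + b • σ₂) = a • (t • σ₁) + b • (t • σ₂) := by
      rw [smul_add, smul_comm t a, smul_comm t b]
    simp only [smul_sub]
    rw [e1]
    conv_lhs => rw [← hρab]
    abel
  have hdisj : Disjoint ((fun σ => ρ - t • σ) '' F)
      {A : Matrix (Fin d) (Fin d) ℂ | A.PosSemidef} := by
    rw [Set.disjoint_left]
    rintro _ ⟨σ, hσ, rfl⟩ hA
    exact hinf σ hσ hA
  obtain ⟨f, u, v, hfu, huv, hfv⟩ :=
    geometric_hahn_banach_compact_closed hs_conv hs_comp convex_psd isClosed_psd hdisj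
  have hv0 : v < 0 := by
    have := hfv 0 Matrix.PosSemidef.zero
    simpa using this
  have hu0 : u < 0 := lt_trans huv hv0
  have hfP : ∀ B : Matrix (Fin d) (Fin d) ℂ, B.PosSemidef → 0 ≤ f B := by
    intro B hB
    by_contra hcon
    push_neg at hcon
    have hr : 0 ≤ (v - 1) / f B := le_of_lt (div_pos_of_neg_of_neg (by linarith) hcon)
    have h2 := hfv (((v - 1) / f B) • B) (psd_smul hB hr)
    rw [_root_.map_smul, smul_eq_mul, div_mul_cancel₀ _ (ne_of_lt hcon)] at h2
    linarith
  obtain ⟨Y, hYrep⟩ := clm_eq_re_trace f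
  set H := (2⁻¹ : ℂ) • (Y + Yᴴ) with hHdef
  have hHherm : H.IsHermitian := by
    show Hᴴ = H
    rw [hHdef, Matrix.conjTranspose_smul, Matrix.conjTranspose_add,
      Matrix.conjTranspose_conjTranspose]
    rw [add_comm Yᴴ Y]
    congr 1
    simp
  have hHeq : ∀ X : Matrix (Fin d) (Fin d) ℂ, X.IsHermitian → ((H * X).trace).re = f X := by
    intro X hX
    have h2 : ((H * X).trace) = 2⁻¹ * ((Y * X).trace + (Yᴴ * X).trace) := by
      rw [hHdef, Matrix.smul_mul, Matrix.add_mul, Matrix.trace_smul, Matrix.trace_add,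
        smul_eq_mul]
    have h3 : ((Yᴴ * X).trace) = star ((Y * X).trace) := by
      have h4 : (Yᴴ * X).trace = ((Y * X)ᴴ).trace := by
        rw [Matrix.conjTranspose_mul, hX.eq, Matrix.trace_mul_comm]
      rw [h4, Matrix.trace_conjTranspose]
    rw [h2, h3, hYrep X]
    simp [Complex.mul_re, Complex.add_re, Complex.add_im, Complex.star_def]
    ring
  have hHpsd : H.PosSemidef :=
    psd_of_re_trace_nonneg hHherm (fun B hB => by rw [hHeq B hB.1]; exact hfP B hB)
  have hρH : 0 ≤ f ρ := by
    rw [← hHeq ρ hρ.1]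
    exact re_trace_mul_nonneg hHpsd hρ
  have hsep : ∀ σ ∈ F, f ρ - t * f σ < u := by
    intro σ hσ
    have h5 := hfu _ ⟨σ, hσ, rfl⟩
    rwa [map_sub, _root_.map_smul, smul_eq_mul] at h5
  have hmge : (f ρ - u) / t ≤ sInf ((fun σ => ((H * σ).trace).re) '' F) := by
    refine le_csInf ((hne.image _)) ?_
    rintro _ ⟨σ, hσ, rfl⟩
    dsimp only
    rw [hHeq σ (hFherm σ hσ)]
    have := hsep σ hσ
    rw [div_le_iff₀ ht]
    nlinarith
  have hmpos : 0 < sInf ((fun σ => ((H * σ).trace).re) '' F) :=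
    lt_of_lt_of_le (div_pos (by linarith) ht) hmge
  refine ⟨H, hHpsd, hmpos, ?_⟩
  rw [div_le_iff₀ hmpos, hHeq ρ hρ.1]
  rw [div_le_iff₀ ht] at hmge
  nlinarith

end WgtGameAux

open WgtGameAux Matrix in
/-- Game characterization of the convex weight of states: the infimum over positive
semidefinite witnesses `Y` with positive minimal payoff over `F` of the payoff
ratio equals `1 - W_F(ρ)`. -/
theorem wgt_game {d : ℕ} (F : Set (Matrix (Fin d) (Fin d) ℂ))
    (hne : F.Nonempty) (hcomp : IsCompact F) (hconv : Convex ℝ F)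
    (hFd : ∀ σ ∈ F, IsDensity σ)
    (ρ : Matrix (Fin d) (Fin d) ℂ) (hρ : IsDensity ρ) :
    sInf {x : ℝ | ∃ Y : Matrix (Fin d) (Fin d) ℂ, Y.PosSemidef ∧
        0 < sInf ((fun σ => ((Y * σ).trace).re) '' F) ∧
        x = ((Y * ρ).trace).re / sInf ((fun σ => ((Y * σ).trace).re) '' F)} =
      1 - (WgtS F ρ).toReal := by
  classical
  obtain ⟨σ₀, hσ₀⟩ := hne
  set M := {μ : ℝ | 0 ≤ μ ∧ μ ≤ 1 ∧ ∃ τ, IsDensity τ ∧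
      ∃ σ ∈ F, ρ = μ • τ + (1 - μ) • σ} with hMdef
  set L := {x : ℝ | ∃ Y : Matrix (Fin d) (Fin d) ℂ, Y.PosSemidef ∧
        0 < sInf ((fun σ => ((Y * σ).trace).re) '' F) ∧
        x = ((Y * ρ).trace).re / sInf ((fun σ => ((Y * σ).trace).re) '' F)} with hLdef
  have hM1 : (1:ℝ) ∈ M := by
    refine ⟨zero_le_one, le_refl 1, ρ, hρ, σ₀, hσ₀, ?_⟩
    rw [one_smul, sub_self, zero_smul, add_zero]
  have hMbdd : BddBelow M := ⟨0, fun μ hμ => hμ.1⟩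
  set W := sInf M with hWdef
  have hW0 : 0 ≤ W := le_csInf ⟨1, hM1⟩ fun μ hμ => hμ.1
  have hW1 : W ≤ 1 := csInf_le hMbdd hM1
  -- (WgtS F ρ).toReal = W
  have hWgt : (WgtS F ρ).toReal = W := by
    have hWgtEq : WgtS F ρ = ENNReal.ofReal W := by
      refine le_antisymm ?_ (le_iInf₂ fun μ hμ =>
        ENNReal.ofReal_le_ofReal (csInf_le hMbdd hμ))
      refine ENNReal.le_of_forall_pos_le_add fun ε hε _ => ?_
      obtain ⟨μ, hμM, hμlt⟩ := exists_lt_of_csInf_lt ⟨1, hM1⟩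
        (show sInf M < W + ε by
          have : (0:ℝ) < ε := hε
          rw [← hWdef]; linarith)
      calc WgtS F ρ ≤ ENNReal.ofReal μ := iInf₂_le μ hμM
        _ ≤ ENNReal.ofReal (W + ε) := ENNReal.ofReal_le_ofReal (le_of_lt hμlt)
        _ ≤ ENNReal.ofReal W + ENNReal.ofReal ε := ENNReal.ofReal_add_le
        _ = ENNReal.ofReal W + ε := by rw [ENNReal.ofReal_coe_nnreal]
    rw [hWgtEq, ENNReal.toReal_ofReal hW0]
  rw [hWgt]
  -- continuity and boundedness facts
  have hcont : ∀ Y : Matrix (Fin d) (Fin d) ℂ,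
      Continuous fun σ : Matrix (Fin d) (Fin d) ℂ => ((Y * σ).trace).re :=
    fun Y => Complex.continuous_re.comp ((continuous_const.matrix_mul continuous_id).matrix_trace)
  have himgbdd : ∀ Y : Matrix (Fin d) (Fin d) ℂ,
      BddBelow ((fun σ => ((Y * σ).trace).re) '' F) :=
    fun Y => (hcomp.image (hcont Y)).bddBelow
  -- weak duality
  have hweak : ∀ x ∈ L, 1 - W ≤ x := by
    rintro x ⟨Y, hY, hm, rfl⟩
    have key : ∀ μ ∈ M, 1 - μ ≤ ((Y * ρ).trace).re / sInf ((fun σ => ((Y * σ).trace).re) '' F) := by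
      rintro μ ⟨hμ0, hμ1, τ, hτ, σ, hσF, hdec⟩
      have hpρ : ((Y * ρ).trace).re
          = μ * ((Y * τ).trace).re + (1 - μ) * ((Y * σ).trace).re := by
        rw [hdec, Matrix.mul_add, Matrix.mul_smul, Matrix.mul_smul, Matrix.trace_add,
          Matrix.trace_smul, Matrix.trace_smul, Complex.add_re, Complex.smul_re,
          Complex.smul_re]
        norm_num
      have hpτ : 0 ≤ ((Y * τ).trace).re := re_trace_mul_nonneg hY hτ.1
      have hpσ : sInf ((fun σ => ((Y * σ).trace).re) '' F) ≤ ((Y * σ).trace).re :=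
        csInf_le (himgbdd Y) ⟨σ, hσF, rfl⟩
      rw [le_div_iff₀ hm]
      nlinarith
    have h1x : 1 - ((Y * ρ).trace).re / sInf ((fun σ => ((Y * σ).trace).re) '' F) ≤ W :=
      le_csInf ⟨1, hM1⟩ fun μ hμ => by have := key μ hμ; linarith
    linarith
  -- 1 ∈ L
  have himg1 : (fun σ => (((1 : Matrix (Fin d) (Fin d) ℂ) * σ).trace).re) '' F = {1} := by
    ext y
    constructor
    · rintro ⟨σ, hσ, rfl⟩
      simp [Matrix.one_mul, (hFd σ hσ).2]
    · rintro rfl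
      exact ⟨σ₀, hσ₀, by simp [Matrix.one_mul, (hFd σ₀ hσ₀).2]⟩
  have hL1 : (1:ℝ) ∈ L := by
    refine ⟨1, Matrix.PosSemidef.one, ?_, ?_⟩
    · rw [himg1, csInf_singleton]; norm_num
    · rw [himg1, csInf_singleton, Matrix.one_mul, hρ.2]
      norm_num
  have hLbdd : BddBelow L := ⟨1 - W, hweak⟩
  refine le_antisymm ?_ (le_csInf ⟨1, hL1⟩ hweak)
  -- strong duality
  rcases eq_or_lt_of_le hW0 with hWz | hWpos
  · have : sInf L ≤ 1 := csInf_le hLbdd hL1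
    rw [← hWz]
    linarith
  · refine le_of_forall_pos_le_add fun ε hε => ?_
    set δ := min ε W with hδdef
    have hδpos : 0 < δ := lt_min hε hWpos
    have hδW : δ ≤ W := min_le_right _ _
    have hδε : δ ≤ ε := min_le_left _ _
    set t := 1 - W + δ / 2 with htdef
    have ht1 : t < 1 := by rw [htdef]; linarith
    have htpos : 0 < t := by rw [htdef]; linarith
    have hinf : ∀ σ ∈ F, ¬ (ρ - t • σ).PosSemidef := by
      intro σ hσ hpsd
      have hμpos : 0 < 1 - t := by linarith
      have hμM : (1 - t) ∈ M := by
        refine ⟨le_of_lt hμpos, by linarith, (1 - t)⁻¹ • (ρ - t • σ),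
          ⟨psd_smul hpsd (le_of_lt (inv_pos.mpr hμpos)), ?_⟩, σ, hσ, ?_⟩
        · rw [Matrix.trace_smul, Matrix.trace_sub, Matrix.trace_smul, hρ.2, (hFd σ hσ).2]
          rw [Complex.real_smul, Complex.real_smul]
          push_cast
          rw [mul_comm]
          rw [mul_inv_eq_one₀]
          · ring
          · exact_mod_cast (ne_of_gt hμpos)
        · rw [sub_sub_cancel, smul_smul, mul_inv_cancel₀ (ne_of_gt hμpos), one_smul]
          rw [sub_add_cancel]
      have := csInf_le hMbdd hμM
      rw [← hWdef] at this
      rw [htdef] at this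
      linarith
    obtain ⟨Y, hY, hm, hle⟩ := sep_witness ⟨σ₀, hσ₀⟩ hcomp hconv
      (fun σ hσ => (hFd σ hσ).1.1) hρ.1 htpos hinf
    have hxL : ((Y * ρ).trace).re / sInf ((fun σ => ((Y * σ).trace).re) '' F) ∈ L :=
      ⟨Y, hY, hm, rfl⟩
    have := csInf_le hLbdd hxL
    have ht2 : t ≤ 1 - W + ε := by rw [htdef]; linarith
    linarith
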